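/- Let Λ be a finitely generated free abelian group, Π ⊆ Λ a finite-index subgroup, ε: Π → Z/2 a homomorphism, and W a finite group acting on Λ preserving Π and ε, such that reflections in W act by -1 on the sign module Z(ε-twisted). Then the group Hom_{Π⋊W}(Λ, Z(ε)) of (Π⋊W)-equivariant functions Λ → Z (where Π acts on Λ by translation and on Z by ε, and W acts by its natural action on Λ and trivially twisted by sign on Z) is a free abelian group of rank equal to the number of free W-orbits on the finite set Λ_ε of Π-cosets in Λ satisfying the ε-compatibility, i.e. the number of free (Π⋊W)-orbits in Λ. -/

import Mathlib

variable (Λ : Type*) [AddCommGroup Λ]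
variable (W : Type*) [Group W] [DistribMulAction W Λ]

/-- The orbit equivalence relation on `Λ` of the extended affine Weyl group
`Π ⋊ W`, where `Π ⊆ Λ` acts by translations and `W` by its natural action. -/
def extAffSetoid (P : AddSubgroup Λ)
    (hP : ∀ (w : W) (v : Λ), v ∈ P → w • v ∈ P) : Setoid Λ where
  r x y := ∃ (w : W) (π : Λ), π ∈ P ∧ w • x + π = y
  iseqv := by
    constructor
    · exact fun x => ⟨1, 0, P.zero_mem, by simp⟩
    · rintro x y ⟨w, π, hπ, rfl⟩
      exact ⟨w⁻¹, -(w⁻¹ • π), P.neg_mem (hP w⁻¹ π hπ), by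
        rw [smul_add, inv_smul_smul]; abel⟩
    · rintro x y z ⟨w, π, hπ, rfl⟩ ⟨w', π', hπ', rfl⟩
      exact ⟨w' * w, w' • π + π', P.add_mem (hP w' π hπ) hπ', by
        rw [mul_smul, smul_add]; abel⟩

/-- The `(Π ⋊ W)`-equivariant functions `f : Λ → ℤ(ε)`: `f(λ + π) = ε(π)f(λ)`
for `π ∈ Π` and `f(w·λ) = sgn(w)·f(λ)` for `w ∈ W`, as a `ℤ`-submodule of
`Λ → ℤ`. -/
def equivariantFunctions (P : AddSubgroup Λ) (ε : P → ℤˣ) (sgn : W →* ℤˣ) :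
    Submodule ℤ (Λ → ℤ) where
  carrier := {f | (∀ (π : P) (x : Λ), f (x + π) = (ε π : ℤ) * f x) ∧
    (∀ (w : W) (x : Λ), f (w • x) = (sgn w : ℤ) * f x)}
  zero_mem' := ⟨fun _ _ => by simp, fun _ _ => by simp⟩
  add_mem' := by
    rintro f g ⟨hf1, hf2⟩ ⟨hg1, hg2⟩
    exact ⟨fun π x => by simp [hf1 π x, hg1 π x]; ring,
      fun w x => by simp [hf2 w x, hg2 w x]; ring⟩
  smul_mem' := by
    rintro c f ⟨hf1, hf2⟩
    exact ⟨fun π x => by simp [hf1 π x]; ring,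
      fun w x => by simp [hf2 w x]; ring⟩

/-- The set of "free" (regular) orbits: classes all of whose elements `x` have
trivial `ε`-twisted stabilizer, i.e. whenever `(π, w)` fixes `x` (that is,
`x - w • x = π ∈ Π`), the twist `sgn(w)·ε(π)` is `+1`. -/
def freeOrbits (P : AddSubgroup Λ) (hP : ∀ (w : W) (v : Λ), v ∈ P → w • v ∈ P)
    (ε : P → ℤˣ) (sgn : W →* ℤˣ) : Set (Quotient (extAffSetoid Λ W P hP)) :=
  {q | ∀ x : Λ, Quotient.mk (extAffSetoid Λ W P hP) x = q →
    ∀ (w : W) (hm : x - w • x ∈ P), sgn w * ε ⟨x - w • x, hm⟩ = 1}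

section Aux

variable {Λ W}

lemma eps_zero {P : AddSubgroup Λ} (ε : P → ℤˣ)
    (hε : ∀ a b : P, ε (a + b) = ε a * ε b) : ε 0 = 1 := by
  have h := hε 0 0
  rw [add_zero] at h
  nth_rewrite 1 [← mul_one (ε 0)] at h
  exact (mul_left_cancel h).symm

lemma eps_neg {P : AddSubgroup Λ} (ε : P → ℤˣ)
    (hε : ∀ a b : P, ε (a + b) = ε a * ε b) (a : P) : ε (-a) = ε a := by
  have h := hε a (-a)
  rw [add_neg_cancel, eps_zero ε hε] at h
  rcases Int.units_eq_one_or (ε a) with h1 | h1 <;>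
    rcases Int.units_eq_one_or (ε (-a)) with h2 | h2 <;> simp_all

lemma eps_sub {P : AddSubgroup Λ} (ε : P → ℤˣ)
    (hε : ∀ a b : P, ε (a + b) = ε a * ε b) (a b : P) :
    ε (a - b) = ε a * ε b := by
  rw [sub_eq_add_neg, hε, eps_neg ε hε]

lemma key_welldef {P : AddSubgroup Λ}
    (hP : ∀ (w : W) (v : Λ), v ∈ P → w • v ∈ P)
    (ε : P → ℤˣ) (hε : ∀ a b : P, ε (a + b) = ε a * ε b)
    (hεW : ∀ (w : W) (π : P), ε ⟨w • (π : Λ), hP w π π.2⟩ = ε π)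
    (sgn : W →* ℤˣ) (r x : Λ)
    (hfree : ∀ (w : W) (hm : r - w • r ∈ P), sgn w * ε ⟨r - w • r, hm⟩ = 1)
    (w w' : W) (π π' : Λ) (hπ : π ∈ P) (hπ' : π' ∈ P)
    (h1 : w • r + π = x) (h2 : w' • r + π' = x) :
    sgn w * ε ⟨π, hπ⟩ = sgn w' * ε ⟨π', hπ'⟩ := by
  have h3 : w • r + π = w' • r + π' := h1.trans h2.symm
  have h4 : w'⁻¹ • (w • r) + w'⁻¹ • π = r + w'⁻¹ • π' := by
    rw [← smul_add, h3, smul_add, inv_smul_smul]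
  have e : r - (w'⁻¹ * w) • r = w'⁻¹ • (π - π') := by
    rw [mul_smul, smul_sub, sub_eq_sub_iff_add_eq_add, ← h4, add_comm]
  have hm : r - (w'⁻¹ * w) • r ∈ P := by
    rw [e]; exact hP _ _ (P.sub_mem hπ hπ')
  have h5 := hfree (w'⁻¹ * w) hm
  have hval : ε ⟨r - (w'⁻¹ * w) • r, hm⟩ = ε ⟨π, hπ⟩ * ε ⟨π', hπ'⟩ := by
    have e1 : (⟨r - (w'⁻¹ * w) • r, hm⟩ : P) =
        ⟨w'⁻¹ • ((⟨π, hπ⟩ - ⟨π', hπ'⟩ : P) : Λ), hP _ _ (⟨π, hπ⟩ - ⟨π', hπ'⟩ : P).2⟩ :=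
      Subtype.ext e
    rw [e1, hεW w'⁻¹ (⟨π, hπ⟩ - ⟨π', hπ'⟩ : P), eps_sub ε hε]
  rw [map_mul, map_inv, hval] at h5
  rcases Int.units_eq_one_or (sgn w) with ha | ha <;>
    rcases Int.units_eq_one_or (sgn w') with hb | hb <;>
    rcases Int.units_eq_one_or (ε ⟨π, hπ⟩) with hc | hc <;>
    rcases Int.units_eq_one_or (ε ⟨π', hπ'⟩) with hd | hd <;>
    simp_all

end Aux

/-- Proposition 3.2 (thm:15) of "Loop groups and twisted K-theory I",
abstracted: let `Λ` be a (finitely generated free) character lattice, `Π ⊆ Λ`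
a finite-index subgroup with grading homomorphism `ε : Π → {±1}`, and `W` a
finite group acting on `Λ` preserving `Π` and `ε`, with sign character `sgn`.
Then the group `Hom_{Π⋊W}(Λ, ℤ(ε))` of equivariant functions is a free
abelian group of rank the (finite) number of free `(Π⋊W)`-orbits in `Λ`:
it is isomorphic to the group of `ℤ`-valued functions on the finite set of
free orbits. -/
theorem equivariantFunctions_free_of_rank_card_freeOrbits
    [Finite W] [Module.Free ℤ Λ] [Module.Finite ℤ Λ]
    (P : AddSubgroup Λ) [P.FiniteIndex]
    (hP : ∀ (w : W) (v : Λ), v ∈ P → w • v ∈ P)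
    (ε : P → ℤˣ) (hε : ∀ a b : P, ε (a + b) = ε a * ε b)
    (hεW : ∀ (w : W) (π : P), ε ⟨w • (π : Λ), hP w π π.2⟩ = ε π)
    (sgn : W →* ℤˣ) :
    Finite (freeOrbits Λ W P hP ε sgn) ∧
    Nonempty ((equivariantFunctions Λ W P ε sgn) ≃ₗ[ℤ]
      ((freeOrbits Λ W P hP ε sgn) → ℤ)) := by
  classical
  set S := extAffSetoid Λ W P hP with hS
  -- Finiteness of the quotient
  have hfinQ : Finite (Quotient S) := by
    refine Finite.of_surjective
      (fun y : Λ ⧸ P => Quotient.liftOn' y (Quotient.mk S) ?_) ?_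
    · intro a b hab
      refine Quotient.sound ⟨1, b - a, ?_, by simp⟩
      rwa [← neg_add_eq_sub, ← QuotientAddGroup.leftRel_apply]
    · intro q
      induction q using Quotient.ind with
      | _ x => exact ⟨QuotientAddGroup.mk x, rfl⟩
  have hfin : Finite (freeOrbits Λ W P hP ε sgn) := Subtype.finite
  refine ⟨hfin, ?_⟩
  -- quotient equalities
  have hq1 : ∀ (π : P) (x : Λ), Quotient.mk S (x + (π : Λ)) = Quotient.mk S x := by
    intro π x
    refine (Quotient.sound ?_).symm
    exact (⟨1, π, π.2, by simp⟩ :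
      ∃ (w : W) (π' : Λ), π' ∈ P ∧ w • x + π' = x + (π : Λ))
  have hq2 : ∀ (w : W) (x : Λ), Quotient.mk S (w • x) = Quotient.mk S x := by
    intro w x
    refine (Quotient.sound ?_).symm
    exact (⟨w, 0, P.zero_mem, add_zero _⟩ :
      ∃ (w' : W) (π' : Λ), π' ∈ P ∧ w' • x + π' = w • x)
  -- the evaluation map
  let Φ : equivariantFunctions Λ W P ε sgn →ₗ[ℤ] (freeOrbits Λ W P hP ε sgn → ℤ) :=
    { toFun := fun f q => (f : Λ → ℤ) q.1.out
      map_add' := fun f g => rfl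
      map_smul' := fun c f => rfl }
  -- propagation of values for equivariant functions
  have hprop : ∀ (f : equivariantFunctions Λ W P ε sgn) (x : Λ) (w : W) (π : Λ)
      (hπ : π ∈ P), (f : Λ → ℤ) (w • x + π) =
        ((sgn w * ε ⟨π, hπ⟩ : ℤˣ) : ℤ) * (f : Λ → ℤ) x := by
    intro f x w π hπ
    obtain ⟨hf1, hf2⟩ := f.2
    have h1 := hf1 ⟨π, hπ⟩ (w • x)
    have h2 := hf2 w x
    rw [h1, h2]; push_cast; ring
  -- injectivity
  have hinj : Function.Injective Φ := by
    rw [injective_iff_map_eq_zero]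
    intro f hf
    apply Subtype.ext
    funext x
    show (f : Λ → ℤ) x = 0
    by_cases h : Quotient.mk S x ∈ freeOrbits Λ W P hP ε sgn
    · have hout : (f : Λ → ℤ) (Quotient.mk S x).out = 0 := by
        have := congrFun hf ⟨Quotient.mk S x, h⟩
        simpa [Φ] using this
      obtain ⟨w, π, hπ, heq⟩ :
          ∃ (w : W) (π : Λ), π ∈ P ∧ w • (Quotient.mk S x).out + π = x :=
        Quotient.exact ((Quotient.mk S x).out_eq)
      rw [← heq, hprop f _ w π hπ, hout, mul_zero]
    · change ¬ (∀ y : Λ, Quotient.mk S y = Quotient.mk S x → ∀ (w : W) (hm : y - w • y ∈ P), sgn w * ε ⟨y - w • y, hm⟩ = 1) at h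
      simp only [not_forall] at h
      obtain ⟨y, hy, w, hm, hne⟩ := h
      have hneg : sgn w * ε ⟨y - w • y, hm⟩ = -1 := by
        rcases Int.units_eq_one_or (sgn w * ε ⟨y - w • y, hm⟩) with h' | h'
        · exact absurd h' hne
        · exact h'
      have hy0 : (f : Λ → ℤ) y = 0 := by
        have heq : w • y + (y - w • y) = y := by abel
        have := hprop f y w (y - w • y) hm
        rw [heq, hneg] at this
        push_cast at this
        linarith
      obtain ⟨v, π, hπ, heq⟩ : ∃ (v : W) (π : Λ), π ∈ P ∧ v • y + π = x :=
        Quotient.exact hy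
      rw [← heq, hprop f y v π hπ, hy0, mul_zero]
  -- surjectivity
  have hsurj : Function.Surjective Φ := by
    intro g
    have hrel : ∀ x : Λ, ∃ (w : W) (π : Λ),
        π ∈ P ∧ w • (Quotient.mk S x).out + π = x :=
      fun x => Quotient.exact ((Quotient.mk S x).out_eq)
    choose w₀ π₀ hπ₀ hw₀ using hrel
    set F : Λ → ℤ := fun x =>
      if h : Quotient.mk S x ∈ freeOrbits Λ W P hP ε sgn
      then ((sgn (w₀ x) * ε ⟨π₀ x, hπ₀ x⟩ : ℤˣ) : ℤ) * g ⟨Quotient.mk S x, h⟩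
      else 0 with hF_def
    have hfreecond : ∀ (x : Λ), Quotient.mk S x ∈ freeOrbits Λ W P hP ε sgn →
        ∀ (w : W) (hm : (Quotient.mk S x).out - w • (Quotient.mk S x).out ∈ P),
          sgn w * ε ⟨(Quotient.mk S x).out - w • (Quotient.mk S x).out, hm⟩ = 1 :=
      fun x h w hm => h _ ((Quotient.mk S x).out_eq) w hm
    have hF : ∀ (x : Λ) (h : Quotient.mk S x ∈ freeOrbits Λ W P hP ε sgn)
        (w : W) (π : Λ) (hπ : π ∈ P),
        w • (Quotient.mk S x).out + π = x →
        F x = ((sgn w * ε ⟨π, hπ⟩ : ℤˣ) : ℤ) * g ⟨Quotient.mk S x, h⟩ := by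
      intro x h w π hπ heq
      have hkey := key_welldef hP ε hε hεW sgn (Quotient.mk S x).out x
        (hfreecond x h) (w₀ x) w (π₀ x) π (hπ₀ x) hπ (hw₀ x) heq
      rw [hF_def]
      simp only [dif_pos h, hkey]
    have hFmem1 : ∀ (π : P) (x : Λ), F (x + (π : Λ)) = (ε π : ℤ) * F x := by
      intro π x
      by_cases h : Quotient.mk S x ∈ freeOrbits Λ W P hP ε sgn
      · have h' : Quotient.mk S (x + (π : Λ)) ∈ freeOrbits Λ W P hP ε sgn := by
          rw [hq1]; exact h
        have e1 := hF (x + (π : Λ)) h' (w₀ x) (π₀ x + π) (P.add_mem (hπ₀ x) π.2)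
          (by rw [hq1 π x, ← add_assoc, hw₀ x])
        have e2 := hF x h (w₀ x) (π₀ x) (hπ₀ x) (hw₀ x)
        have hg : g ⟨Quotient.mk S (x + (π : Λ)), h'⟩ = g ⟨Quotient.mk S x, h⟩ := by
          congr 1; exact Subtype.ext (hq1 π x)
        have hε' : ε ⟨π₀ x + (π : Λ), P.add_mem (hπ₀ x) π.2⟩ =
            ε ⟨π₀ x, hπ₀ x⟩ * ε π := by
          have := hε ⟨π₀ x, hπ₀ x⟩ π
          convert this using 2
          exact Subtype.ext rfl
        rw [e1, e2, hg, hε']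
        push_cast; ring
      · have h' : Quotient.mk S (x + (π : Λ)) ∉ freeOrbits Λ W P hP ε sgn := by
          rw [hq1]; exact h
        rw [hF_def]
        simp only [dif_neg h, dif_neg h', mul_zero]
    have hFmem2 : ∀ (w : W) (x : Λ), F (w • x) = (sgn w : ℤ) * F x := by
      intro w x
      by_cases h : Quotient.mk S x ∈ freeOrbits Λ W P hP ε sgn
      · have h' : Quotient.mk S (w • x) ∈ freeOrbits Λ W P hP ε sgn := by
          rw [hq2]; exact h
        have e1 := hF (w • x) h' (w * w₀ x) (w • π₀ x) (hP w _ (hπ₀ x))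
          (by rw [hq2 w x, mul_smul, ← smul_add, hw₀ x])
        have e2 := hF x h (w₀ x) (π₀ x) (hπ₀ x) (hw₀ x)
        have hg : g ⟨Quotient.mk S (w • x), h'⟩ = g ⟨Quotient.mk S x, h⟩ := by
          congr 1; exact Subtype.ext (hq2 w x)
        have hε' : ε ⟨w • π₀ x, hP w _ (hπ₀ x)⟩ = ε ⟨π₀ x, hπ₀ x⟩ :=
          hεW w ⟨π₀ x, hπ₀ x⟩
        rw [e1, e2, hg, hε', map_mul]
        push_cast; ring
      · have h' : Quotient.mk S (w • x) ∉ freeOrbits Λ W P hP ε sgn := by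
          rw [hq2]; exact h
        rw [hF_def]
        simp only [dif_neg h, dif_neg h', mul_zero]
    refine ⟨⟨F, hFmem1, hFmem2⟩, ?_⟩
    funext q
    obtain ⟨q, hqfree⟩ := q
    have hout : Quotient.mk S q.out = q := q.out_eq
    have h : Quotient.mk S q.out ∈ freeOrbits Λ W P hP ε sgn := by
      rw [hout]; exact hqfree
    have e := hF q.out h 1 0 P.zero_mem (by rw [hout]; simp)
    have hg : g ⟨Quotient.mk S q.out, h⟩ = g ⟨q, hqfree⟩ := by
      congr 1; exact Subtype.ext hout
    have hε0 : ε ⟨0, P.zero_mem⟩ = 1 := eps_zero ε hε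
    show F q.out = g ⟨q, hqfree⟩
    rw [e, hg, map_one, hε0, one_mul, Units.val_one, one_mul]
  exact ⟨LinearEquiv.ofBijective Φ ⟨hinj, hsurj⟩⟩
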